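/- arXiv:2407.01974 — 5 statements merged into one kernel-verified Lean document; each statement's English description precedes it below -/
import Mathlib

section
/- Let Σ ∈ PDS(k), let L be a k²×ℓ matrix of full column rank whose columns are vec's of symmetric matrices, and let Π_L = L (Lᵀ (Σ⁻¹ ⊗ Σ⁻¹) L)⁻¹ Lᵀ (Σ⁻¹ ⊗ Σ⁻¹). Then Π_L (I_{k²} + K_{k,k}) (Σ ⊗ Σ) Π_Lᵀ = 2 L (Lᵀ (Σ⁻¹ ⊗ Σ⁻¹) L)⁻¹ Lᵀ. -/
open Matrix
open scoped Kronecker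

/-- `vecm M` stacks the columns of `M` into a vector: `vecm M (j, i) = M i j`. -/
def vecm {k : ℕ} (M : Matrix (Fin k) (Fin k) ℝ) : Fin k × Fin k → ℝ :=
  fun p => M p.2 p.1

/-- `Π_L (I + K)(Σ ⊗ Σ) Π_Lᵀ = 2 L (Lᵀ (Σ⁻¹ ⊗ Σ⁻¹) L)⁻¹ Lᵀ` where `Π_L` is the scaled
projection, `K` the commutation matrix and the columns of `L` are vec's of symmetric matrices. -/
theorem projection_sandwich {k l : ℕ}
    (S : Matrix (Fin k) (Fin k) ℝ) (hS : S.PosDef)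
    (K : Matrix (Fin k × Fin k) (Fin k × Fin k) ℝ)
    (hK : ∀ A : Matrix (Fin k) (Fin k) ℝ, K.mulVec (vecm A) = vecm Aᵀ)
    (Ls : Fin l → Matrix (Fin k) (Fin k) ℝ)
    (hsym : ∀ j, (Ls j)ᵀ = Ls j)
    (L : Matrix (Fin k × Fin k) (Fin l) ℝ)
    (hLdef : L = Matrix.of fun p j => vecm (Ls j) p)
    (hrank : L.rank = l) :
    (L * (Lᵀ * (S⁻¹ ⊗ₖ S⁻¹) * L)⁻¹ * Lᵀ * (S⁻¹ ⊗ₖ S⁻¹)) * ((1 + K) * (S ⊗ₖ S)) *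
        (L * (Lᵀ * (S⁻¹ ⊗ₖ S⁻¹) * L)⁻¹ * Lᵀ * (S⁻¹ ⊗ₖ S⁻¹))ᵀ =
      (2 : ℝ) • (L * (Lᵀ * (S⁻¹ ⊗ₖ S⁻¹) * L)⁻¹ * Lᵀ) := by
  -- explicit form of the commutation matrix
  have hKeq : K = Matrix.of fun a b => if a.1 = b.2 ∧ a.2 = b.1 then (1:ℝ) else 0 := by
    ext a b
    have h := congrFun (hK (Matrix.of fun i j => if i = b.2 ∧ j = b.1 then (1:ℝ) else 0)) a
    have hv : vecm (Matrix.of fun i j => if i = b.2 ∧ j = b.1 then (1:ℝ) else 0)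
        = fun p => if p = b then 1 else 0 := by
      funext p
      simp [vecm, Prod.ext_iff, and_comm]
    rw [hv] at h
    simp [Matrix.mulVec, dotProduct] at h
    simp [h, vecm, Matrix.transpose_apply]
  have hKT : Kᵀ = K := by
    rw [hKeq]; ext a b
    simp [Matrix.transpose_apply, and_comm, eq_comm]
  have hKcomm : ∀ A B : Matrix (Fin k) (Fin k) ℝ, K * (A ⊗ₖ B) = (B ⊗ₖ A) * K := by
    intro A B
    rw [hKeq]; ext a c
    simp [Matrix.mul_apply, Fintype.sum_prod_type, Prod.ext_iff, ite_and,
      kroneckerMap_apply, Finset.sum_ite_eq, Finset.sum_ite_eq']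
    ring
  -- K fixes L
  have hKL : K * L = L := by
    ext a j
    have h := congrFun (hK (Ls j)) a
    have hcol : (fun p => L p j) = vecm (Ls j) := by
      funext p; rw [hLdef]; rfl
    calc (K * L) a j = K.mulVec (vecm (Ls j)) a := by
          rw [← hcol]; simp [Matrix.mul_apply, Matrix.mulVec, dotProduct]
      _ = vecm (Ls j)ᵀ a := h
      _ = L a j := by rw [hsym j, hLdef]; rfl
  have hLtK : Lᵀ * K = Lᵀ := by
    rw [← hKT, ← Matrix.transpose_mul, hKL]
  -- injectivity of L
  have hLinj : Function.Injective L.mulVec := by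
    rw [show L.mulVec = L.mulVecLin from rfl, ← LinearMap.ker_eq_bot]
    have h := L.mulVecLin.finrank_range_add_finrank_ker
    rw [Matrix.rank] at hrank
    rw [hrank] at h
    simp only [Module.finrank_pi, Fintype.card_fin] at h
    have h0 : Module.finrank ℝ (LinearMap.ker L.mulVecLin) = 0 := by omega
    exact Submodule.finrank_eq_zero.mp h0
  set G := S⁻¹ ⊗ₖ S⁻¹ with hG
  -- IsUnit of the Gram matrix
  have hMu : IsUnit (Lᵀ * G * L) := by
    have hP : (S⁻¹).PosDef := hS.inv
    set C := (open scoped MatrixOrder in CFC.sqrt (S⁻¹)) with hC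
    have hCsym : Cᵀ = C := by
      have := (open scoped MatrixOrder in (CFC.sqrt_nonneg (S⁻¹)).posSemidef).1
      simpa [Matrix.IsHermitian, Matrix.conjTranspose_eq_transpose_of_trivial] using this
    have hCC : C * C = S⁻¹ := open scoped MatrixOrder in CFC.sqrt_mul_sqrt_self _ hP.posSemidef.nonneg
    have hCu : IsUnit C.det := by
      have h1 : IsUnit (C * C).det := by
        rw [hCC]; exact isUnit_iff_ne_zero.mpr hP.det_pos.ne'
      rw [Matrix.det_mul] at h1
      exact isUnit_of_mul_isUnit_left h1
    set D := C ⊗ₖ C with hD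
    have hDu : IsUnit D.det := by
      rw [hD, Matrix.det_kronecker]
      exact (hCu.pow _).mul (hCu.pow _)
    have hDinj : Function.Injective D.mulVec :=
      Matrix.mulVec_injective_iff_isUnit.mpr ((Matrix.isUnit_iff_isUnit_det D).mpr hDu)
    have hDD : D * D = G := by
      rw [hD, hG, ← Matrix.mul_kronecker_mul, hCC]
    have hM : Lᵀ * G * L = (D * L)ᵀ * (D * L) := by
      rw [Matrix.transpose_mul, hD, ← Matrix.kroneckerMap_transpose, hCsym, ← hD, ← hDD]
      simp only [Matrix.mul_assoc]
    rw [hM, ← Matrix.mulVec_injective_iff_isUnit]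
    have hker : ∀ x, ((D * L)ᵀ * (D * L)).mulVec x = 0 → x = 0 := by
      intro x hx
      have h0 : x ⬝ᵥ ((D * L)ᵀ * (D * L)).mulVec x = 0 := by rw [hx]; simp
      rw [← Matrix.mulVec_mulVec, Matrix.dotProduct_mulVec, Matrix.vecMul_transpose,
        dotProduct_self_eq_zero] at h0
      rw [← Matrix.mulVec_mulVec] at h0
      have h2 : L.mulVec x = 0 := hDinj (by simpa using h0)
      exact hLinj (by simpa using h2)
    intro a b hab
    exact sub_eq_zero.mp (hker (a - b) (by rw [Matrix.mulVec_sub, hab, sub_self]))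
  have hMdet : IsUnit (Lᵀ * G * L).det := (Matrix.isUnit_iff_isUnit_det _).mp hMu
  set M := Lᵀ * G * L with hM
  have hMMi : M * M⁻¹ = 1 := Matrix.mul_nonsing_inv _ hMdet
  have hMiM : M⁻¹ * M = 1 := Matrix.nonsing_inv_mul _ hMdet
  -- symmetry facts
  have hST : Sᵀ = S := by
    have := hS.1
    simpa [Matrix.IsHermitian, Matrix.conjTranspose_eq_transpose_of_trivial] using this
  have hSiT : (S⁻¹)ᵀ = S⁻¹ := by
    rw [Matrix.transpose_nonsing_inv, hST]
  have hGT : Gᵀ = G := by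
    rw [hG, ← Matrix.kroneckerMap_transpose, hSiT]
  have hMT : Mᵀ = M := by
    rw [hM]
    simp only [Matrix.transpose_mul, Matrix.transpose_transpose, hGT, Matrix.mul_assoc]
  have hMiT : (M⁻¹)ᵀ = M⁻¹ := by
    rw [Matrix.transpose_nonsing_inv, hMT]
  -- inverse relation
  have hG1 : G * (S ⊗ₖ S) = 1 := by
    rw [hG, ← Matrix.mul_kronecker_mul, Matrix.nonsing_inv_mul _ (isUnit_iff_ne_zero.mpr hS.det_pos.ne'),
      Matrix.one_kronecker_one]
  -- the key middle computation
  have e1 : G * ((1 + K) * (S ⊗ₖ S)) * G = G + K * G := by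
    rw [add_mul, one_mul, mul_add, add_mul, hG1, one_mul]
    congr 1
    calc G * (K * (S ⊗ₖ S)) * G = K * G * (S ⊗ₖ S) * G := by
          rw [← Matrix.mul_assoc, ← hKcomm]
      _ = K * G := by
          have hG1' : (S ⊗ₖ S) * G = 1 := by
            rw [hG, ← Matrix.mul_kronecker_mul,
              Matrix.mul_nonsing_inv _ (isUnit_iff_ne_zero.mpr hS.det_pos.ne'),
              Matrix.one_kronecker_one]
          rw [Matrix.mul_assoc (K * G), hG1', Matrix.mul_one]
  have key : Lᵀ * G * ((1 + K) * (S ⊗ₖ S)) * (G * L) = M + M := by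
    calc Lᵀ * G * ((1 + K) * (S ⊗ₖ S)) * (G * L)
        = Lᵀ * (G * ((1 + K) * (S ⊗ₖ S)) * G) * L := by
          simp only [Matrix.mul_assoc]
      _ = Lᵀ * (G + K * G) * L := by rw [e1]
      _ = M + M := by
          rw [Matrix.mul_add, Matrix.add_mul, ← Matrix.mul_assoc Lᵀ K G, hLtK, hM]
  -- transpose of the projection factor
  have hTr : (L * M⁻¹ * Lᵀ * G)ᵀ = G * (L * (M⁻¹ * Lᵀ)) := by
    simp only [Matrix.transpose_mul, Matrix.transpose_transpose, hGT, hMiT, Matrix.mul_assoc]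
  calc (L * M⁻¹ * Lᵀ * G) * ((1 + K) * (S ⊗ₖ S)) * (L * M⁻¹ * Lᵀ * G)ᵀ
      = L * M⁻¹ * (Lᵀ * G * ((1 + K) * (S ⊗ₖ S)) * (G * L)) * (M⁻¹ * Lᵀ) := by
        rw [hTr]; simp only [Matrix.mul_assoc]
    _ = L * M⁻¹ * (M + M) * (M⁻¹ * Lᵀ) := by rw [key]
    _ = (2 : ℝ) • (L * M⁻¹ * Lᵀ) := by
        have hc : L * M⁻¹ * M * (M⁻¹ * Lᵀ) = L * M⁻¹ * Lᵀ := by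
          rw [Matrix.mul_assoc (L * M⁻¹) M, ← Matrix.mul_assoc M, hMMi, Matrix.one_mul,
            Matrix.mul_assoc]
        rw [Matrix.mul_add, Matrix.add_mul, hc, two_smul]
end

section
/- Let N be a square-integrable random k×k matrix with E[vec(N)] = η vec(Σ) and var(vec(N)) = σ₁ (I_{k²} + K_{k,k})(Σ ⊗ Σ) + σ₂ vec(Σ) vec(Σ)ᵀ, where Σ = V(θ₀) with V linear and L (the matrix of vec's of the symmetric partial derivatives L_j = ∂V/∂θ_j) of full column rank. Define M by vec(M) = Π_L vec(N) with Π_L = L (Lᵀ (Σ⁻¹ ⊗ Σ⁻¹) L)⁻¹ Lᵀ (Σ⁻¹ ⊗ Σ⁻¹). Then E[vec(M)] = η vec(Σ) and var(vec(M)) = 2σ₁ L (Lᵀ (Σ⁻¹ ⊗ Σ⁻¹) L)⁻¹ Lᵀ + σ₂ vec(Σ) vec(Σ)ᵀ. -/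
open Matrix MeasureTheory
open scoped Kronecker

namespace ProjAux

lemma vecm_eq_zero_iff {k : ℕ} {M : Matrix (Fin k) (Fin k) ℝ} : vecm M = 0 ↔ M = 0 := by
  constructor
  · intro h; ext i j; exact congrFun h (j, i)
  · intro h; subst h; rfl

lemma dot_vecm_eq_trace {k : ℕ} (A B : Matrix (Fin k) (Fin k) ℝ) :
    vecm A ⬝ᵥ vecm B = (Aᵀ * B).trace := by
  simp only [vecm, dotProduct, Matrix.trace, Matrix.diag, Matrix.mul_apply,
    Matrix.transpose_apply, Fintype.sum_prod_type]

lemma kron_mulVec {k : ℕ} (A B X : Matrix (Fin k) (Fin k) ℝ) :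
    (A ⊗ₖ B) *ᵥ vecm X = vecm (B * X * Aᵀ) := by
  ext ⟨c, r⟩
  simp only [Matrix.mulVec, dotProduct, vecm, kroneckerMap_apply, Fintype.sum_prod_type,
    Matrix.mul_apply, Matrix.transpose_apply, Finset.sum_mul]
  exact Finset.sum_congr rfl fun c' _ => Finset.sum_congr rfl fun r' _ => by ring

lemma mul_vecMulVec_mul {n : Type*} [Fintype n] [DecidableEq n]
    (P Q : Matrix n n ℝ) (u v : n → ℝ) :
    P * vecMulVec u v * Qᵀ = vecMulVec (P *ᵥ u) (Q *ᵥ v) := by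
  ext p q
  simp only [Matrix.mul_apply, vecMulVec_apply, Matrix.mulVec, dotProduct,
    Matrix.transpose_apply, Finset.sum_mul, Finset.mul_sum]
  exact Finset.sum_congr rfl fun r _ => Finset.sum_congr rfl fun s _ => by ring

lemma mulVec_inj_of_rank {m : Type*} [Fintype m] {l : ℕ} {L : Matrix m (Fin l) ℝ} (h : L.rank = l) :
    Function.Injective L.mulVec := by
  have hk : LinearMap.ker L.mulVecLin = ⊥ := by
    have h1 := LinearMap.finrank_range_add_finrank_ker L.mulVecLin
    rw [show Module.finrank ℝ (Fin l → ℝ) = l by simp] at h1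
    have h2 : Module.finrank ℝ (LinearMap.ker L.mulVecLin) = 0 := by
      have : Module.finrank ℝ (LinearMap.range L.mulVecLin) = l := h
      omega
    exact Submodule.finrank_eq_zero.mp h2
  have := LinearMap.ker_eq_bot.mp hk
  exact this

lemma mulVec_inj_posdef {n : Type*} [Fintype n] [DecidableEq n]
    {T : Matrix n n ℝ} (hT : T.PosDef) {R : Matrix n n ℝ} (hRT : T = Rᵀ * R) :
    IsUnit R := by
  rw [← Matrix.mulVec_injective_iff_isUnit]
  have key : ∀ x, R *ᵥ x = 0 → x = 0 := by
    intro x hx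
    by_contra hx0
    have h := hT.dotProduct_mulVec_pos hx0
    rw [hRT] at h
    rw [show star x = x from rfl] at h
    rw [← Matrix.mulVec_mulVec, Matrix.dotProduct_mulVec, Matrix.vecMul_transpose, hx] at h
    simp at h
  intro a b hab
  have : R *ᵥ (a - b) = 0 := by
    rw [Matrix.mulVec_sub, hab, sub_self]
  have h0 : a - b = 0 := key _ this
  exact sub_eq_zero.mp h0

lemma kron_quad_pos {k : ℕ} {T : Matrix (Fin k) (Fin k) ℝ} (hT : T.PosDef)
    (y : Fin k × Fin k → ℝ) (hy : y ≠ 0) : 0 < y ⬝ᵥ (T ⊗ₖ T) *ᵥ y := by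
  obtain ⟨R, hR⟩ : ∃ R : Matrix (Fin k) (Fin k) ℝ, T = star R * R := by
    open scoped MatrixOrder ComplexOrder in exact CStarAlgebra.nonneg_iff_eq_star_mul_self.mp hT.posSemidef.nonneg
  have hRT : T = Rᵀ * R := by rw [hR, Matrix.star_eq_conjTranspose, Matrix.conjTranspose_eq_transpose_of_trivial]
  have hRu : IsUnit R := mulVec_inj_posdef hT hRT
  have _inst := hRu.invertible
  have hTT : Tᵀ = T := by
    have h := hT.isHermitian
    rwa [Matrix.IsHermitian, Matrix.conjTranspose_eq_transpose_of_trivial] at h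
  set Y : Matrix (Fin k) (Fin k) ℝ := Matrix.of fun i j => y (j, i) with hY
  have hyY : y = vecm Y := by funext p; cases p; rfl
  have hY0 : Y ≠ 0 := by
    intro h
    apply hy
    rw [hyY, h]
    rfl
  set Z := R * Y * Rᵀ with hZ
  have hZ0 : Z ≠ 0 := by
    intro h
    apply hY0
    have hYZ : R⁻¹ * Z * (Rᵀ)⁻¹ = Y := by
      rw [hZ]
      simp [Matrix.mul_assoc]
    rw [← hYZ, h, Matrix.mul_zero, Matrix.zero_mul]
  have hcalc : y ⬝ᵥ (T ⊗ₖ T) *ᵥ y = (Zᵀ * Z).trace := by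
    rw [hyY, kron_mulVec, hTT, dot_vecm_eq_trace]
    have e1 : Zᵀ * Z = R * (Yᵀ * Rᵀ * Z) := by
      rw [hZ]
      simp only [Matrix.transpose_mul, Matrix.transpose_transpose, Matrix.mul_assoc]
    rw [e1, hRT]
    conv_rhs => rw [Matrix.trace_mul_comm]
    rw [hZ]
    simp only [Matrix.mul_assoc]
  rw [hcalc, ← dot_vecm_eq_trace]
  have hvz : vecm Z ≠ 0 := fun h => hZ0 (vecm_eq_zero_iff.mp h)
  have h1 : (0:ℝ) ≤ vecm Z ⬝ᵥ vecm Z :=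
    Finset.sum_nonneg fun i _ => mul_self_nonneg _
  have h2 : vecm Z ⬝ᵥ vecm Z ≠ 0 := fun h => hvz (dotProduct_self_eq_zero.mp h)
  exact lt_of_le_of_ne h1 (Ne.symm h2)

end ProjAux


/-- Theorem 1(i): if `N` is a square-integrable random matrix with mean `η vec Σ` and
variance `σ₁ (I + K)(Σ ⊗ Σ) + σ₂ vec Σ vec Σᵀ`, `Σ = V(θ₀)` a linear covariance structure
with `L` of full column rank, then `M` defined by `vec M = Π_L vec N` satisfies
`E[vec M] = η vec Σ` and `var(vec M) = 2σ₁ L (Lᵀ(Σ⁻¹⊗Σ⁻¹)L)⁻¹ Lᵀ + σ₂ vec Σ vec Σᵀ`. -/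
theorem projected_radial_mean_var {k l : ℕ} {Ω : Type*} [MeasurableSpace Ω]
    (μ : Measure Ω) [IsProbabilityMeasure μ]
    (θ₀ : Fin l → ℝ) (Ls : Fin l → Matrix (Fin k) (Fin k) ℝ)
    (hsym : ∀ j, (Ls j)ᵀ = Ls j)
    (S : Matrix (Fin k) (Fin k) ℝ) (hSdef : S = ∑ j, θ₀ j • Ls j) (hS : S.PosDef)
    (L : Matrix (Fin k × Fin k) (Fin l) ℝ)
    (hLdef : L = Matrix.of fun p j => vecm (Ls j) p)
    (hrank : L.rank = l)
    (K : Matrix (Fin k × Fin k) (Fin k × Fin k) ℝ)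
    (hK : ∀ A : Matrix (Fin k) (Fin k) ℝ, K.mulVec (vecm A) = vecm Aᵀ)
    (N : Ω → Matrix (Fin k) (Fin k) ℝ)
    (hmeas : ∀ p, Measurable fun ω => vecm (N ω) p)
    (hL2 : ∀ p, MemLp (fun ω => vecm (N ω) p) 2 μ)
    (η σ₁ σ₂ : ℝ) (hσ₁ : 0 ≤ σ₁) (hσ₂ : -(2 * σ₁) / k ≤ σ₂)
    (hmean : ∀ p, ∫ ω, vecm (N ω) p ∂μ = η * vecm S p)
    (hvar : (Matrix.of fun p q => ∫ ω,
          (vecm (N ω) p - η * vecm S p) * (vecm (N ω) q - η * vecm S q) ∂μ)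
        = σ₁ • ((1 + K) * (S ⊗ₖ S)) + σ₂ • vecMulVec (vecm S) (vecm S)) :
    (∀ p, ∫ ω,
        (L * (Lᵀ * (S⁻¹ ⊗ₖ S⁻¹) * L)⁻¹ * Lᵀ * (S⁻¹ ⊗ₖ S⁻¹)).mulVec (vecm (N ω)) p ∂μ
          = η * vecm S p) ∧
    (Matrix.of fun p q => ∫ ω,
        ((L * (Lᵀ * (S⁻¹ ⊗ₖ S⁻¹) * L)⁻¹ * Lᵀ * (S⁻¹ ⊗ₖ S⁻¹)).mulVec (vecm (N ω)) p
            - η * vecm S p) *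
        ((L * (Lᵀ * (S⁻¹ ⊗ₖ S⁻¹) * L)⁻¹ * Lᵀ * (S⁻¹ ⊗ₖ S⁻¹)).mulVec (vecm (N ω)) q
            - η * vecm S q) ∂μ)
      = (2 * σ₁) • (L * (Lᵀ * (S⁻¹ ⊗ₖ S⁻¹) * L)⁻¹ * Lᵀ)
          + σ₂ • vecMulVec (vecm S) (vecm S) := by
  classical
  have hdetS : IsUnit S.det := (Matrix.isUnit_iff_isUnit_det S).mp hS.isUnit
  set W : Matrix (Fin k × Fin k) (Fin k × Fin k) ℝ := S⁻¹ ⊗ₖ S⁻¹ with hWdef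
  set B : Matrix (Fin l) (Fin l) ℝ := Lᵀ * W * L with hBdef
  set P : Matrix (Fin k × Fin k) (Fin k × Fin k) ℝ := L * B⁻¹ * Lᵀ * W with hPdef
  clear_value W B P
  have hSinv : S⁻¹.PosDef := hS.inv
  have hSiT : S⁻¹ᵀ = S⁻¹ := by
    have h := hSinv.isHermitian
    rwa [Matrix.IsHermitian, Matrix.conjTranspose_eq_transpose_of_trivial] at h
  have hWT : Wᵀ = W := by
    rw [hWdef]
    rw [show (S⁻¹ ⊗ₖ S⁻¹)ᵀ = S⁻¹ᵀ ⊗ₖ S⁻¹ᵀ from Matrix.kroneckerMap_transpose _ _ _, hSiT]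
  have hWS : W * (S ⊗ₖ S) = 1 := by
    rw [hWdef, ← Matrix.mul_kronecker_mul, Matrix.nonsing_inv_mul _ hdetS,
      Matrix.one_kronecker_one]
  have hSW : (S ⊗ₖ S) * W = 1 := by
    rw [hWdef, ← Matrix.mul_kronecker_mul, Matrix.mul_nonsing_inv _ hdetS,
      Matrix.one_kronecker_one]
  have hLinj : Function.Injective L.mulVec := ProjAux.mulVec_inj_of_rank hrank
  have hBsym : Bᵀ = B := by
    rw [hBdef, Matrix.transpose_mul, Matrix.transpose_mul, Matrix.transpose_transpose, hWT,
      Matrix.mul_assoc]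
  have hBpd : B.PosDef := by
    refine Matrix.PosDef.of_dotProduct_mulVec_pos ?_ ?_
    · rw [Matrix.IsHermitian, Matrix.conjTranspose_eq_transpose_of_trivial]
      exact hBsym
    · intro x hx
      have hx' : L *ᵥ x ≠ 0 := by
        intro h
        exact hx (hLinj (h.trans (Matrix.mulVec_zero L).symm))
      have hpos := ProjAux.kron_quad_pos hSinv (L *ᵥ x) hx'
      rw [show star x = x from rfl, hBdef, ← Matrix.mulVec_mulVec, ← Matrix.mulVec_mulVec,
        Matrix.dotProduct_mulVec, Matrix.vecMul_transpose]
      rw [← hWdef] at hpos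
      exact hpos
  have hdetB : IsUnit B.det := (Matrix.isUnit_iff_isUnit_det B).mp hBpd.isUnit
  have hBiB : B⁻¹ * B = 1 := Matrix.nonsing_inv_mul _ hdetB
  have hBiT : B⁻¹ᵀ = B⁻¹ := by rw [Matrix.transpose_nonsing_inv, hBsym]
  have hPL : P * L = L := by
    rw [hPdef]
    calc L * B⁻¹ * Lᵀ * W * L = L * (B⁻¹ * (Lᵀ * W * L)) := by
          simp only [Matrix.mul_assoc]
      _ = L * (B⁻¹ * B) := by rw [← hBdef]
      _ = L := by rw [hBiB, Matrix.mul_one]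
  have hKL : K * L = L := by
    ext p j
    have h := congrFun (hK (Ls j)) p
    rw [hsym j] at h
    simp only [Matrix.mulVec, dotProduct, vecm] at h
    simp only [Matrix.mul_apply, hLdef, Matrix.of_apply, vecm]
    exact h
  have hvecS : vecm S = L *ᵥ θ₀ := by
    funext p
    rw [hSdef, hLdef]
    simp only [vecm, Matrix.mulVec, dotProduct, Matrix.of_apply, Matrix.sum_apply,
      Matrix.smul_apply, smul_eq_mul]
    exact Finset.sum_congr rfl fun j _ => by ring
  have hPS : P *ᵥ vecm S = vecm S := by
    rw [hvecS, Matrix.mulVec_mulVec, hPL]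
  have hPT : Pᵀ = W * (L * (B⁻¹ * Lᵀ)) := by
    rw [hPdef]
    simp only [Matrix.transpose_mul, hWT, hBiT, Matrix.transpose_transpose, Matrix.mul_assoc]
  have hSSP : (S ⊗ₖ S) * Pᵀ = L * (B⁻¹ * Lᵀ) := by
    rw [hPT, ← Matrix.mul_assoc, hSW, Matrix.one_mul]
  have hPLB : P * (L * (B⁻¹ * Lᵀ)) = L * (B⁻¹ * Lᵀ) := by
    rw [← Matrix.mul_assoc, hPL]
  have hPSSP : P * (S ⊗ₖ S) * Pᵀ = L * (B⁻¹ * Lᵀ) := by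
    rw [Matrix.mul_assoc P (S ⊗ₖ S) Pᵀ, hSSP, hPLB]
  have hKSSP : P * (K * (S ⊗ₖ S)) * Pᵀ = L * (B⁻¹ * Lᵀ) := by
    rw [Matrix.mul_assoc P (K * (S ⊗ₖ S)) Pᵀ, Matrix.mul_assoc K (S ⊗ₖ S) Pᵀ, hSSP,
      ← Matrix.mul_assoc K L (B⁻¹ * Lᵀ), hKL, hPLB]
  have halg : P * (σ₁ • ((1 + K) * (S ⊗ₖ S)) + σ₂ • vecMulVec (vecm S) (vecm S)) * Pᵀ
      = (2 * σ₁) • (L * B⁻¹ * Lᵀ) + σ₂ • vecMulVec (vecm S) (vecm S) := by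
    have h1 : P * (σ₁ • ((1 + K) * (S ⊗ₖ S))) * Pᵀ = (2 * σ₁) • (L * B⁻¹ * Lᵀ) := by
      rw [Matrix.mul_smul, Matrix.smul_mul, add_mul, Matrix.one_mul, Matrix.mul_add,
        Matrix.add_mul, hPSSP, hKSSP, ← Matrix.mul_assoc L B⁻¹ Lᵀ, smul_add, two_mul, add_smul]
    have h2 : P * (σ₂ • vecMulVec (vecm S) (vecm S)) * Pᵀ
        = σ₂ • vecMulVec (vecm S) (vecm S) := by
      rw [Matrix.mul_smul, Matrix.smul_mul, ProjAux.mul_vecMulVec_mul, hPS]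
    rw [Matrix.mul_add, Matrix.add_mul, h1, h2]
  constructor
  · intro p
    have hint : ∀ r : Fin k × Fin k, Integrable (fun ω => P p r * vecm (N ω) r) μ := fun r =>
      ((hL2 r).integrable one_le_two).const_mul _
    calc ∫ ω, (P *ᵥ vecm (N ω)) p ∂μ = ∫ ω, ∑ r, P p r * vecm (N ω) r ∂μ := by
          congr 1
      _ = ∑ r, ∫ ω, P p r * vecm (N ω) r ∂μ := integral_finset_sum _ fun r _ => hint r
      _ = ∑ r, P p r * (η * vecm S r) := by
          refine Finset.sum_congr rfl fun r _ => ?_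
          rw [MeasureTheory.integral_const_mul, hmean r]
      _ = η * ∑ r, P p r * vecm S r := by
          rw [Finset.mul_sum]
          exact Finset.sum_congr rfl fun r _ => by ring
      _ = η * vecm S p := by rw [show ∑ r, P p r * vecm S r = (P *ᵥ vecm S) p from rfl, hPS]
  · set f : (Fin k × Fin k) → Ω → ℝ := fun r ω => vecm (N ω) r - η * vecm S r with hfdef
    have hf2 : ∀ r, MemLp (f r) 2 μ := fun r => (hL2 r).sub (memLp_const _)
    have hmul : ∀ r s, Integrable (fun ω => f r ω * f s ω) μ := by
      intro r s
      have h := (hf2 s).smul (hf2 r) (p := 2) (q := 2) (r := 1)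
      rw [memLp_one_iff_integrable] at h
      exact h
    set V : Matrix (Fin k × Fin k) (Fin k × Fin k) ℝ :=
      Matrix.of fun p q => ∫ ω,
        (vecm (N ω) p - η * vecm S p) * (vecm (N ω) q - η * vecm S q) ∂μ with hVdef
    have hVf : ∀ r s, V r s = ∫ ω, f r ω * f s ω ∂μ := fun r s => rfl
    have hdiff : ∀ (p : Fin k × Fin k) (ω : Ω),
        (P *ᵥ vecm (N ω)) p - η * vecm S p = ∑ r, P p r * f r ω := by
      intro p ω
      have h1 : η * vecm S p = ∑ r, P p r * (η * vecm S r) := by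
        conv_lhs => rw [← hPS]
        rw [show (P *ᵥ vecm S) p = ∑ r, P p r * vecm S r from rfl, Finset.mul_sum]
        exact Finset.sum_congr rfl fun r _ => by ring
      calc (P *ᵥ vecm (N ω)) p - η * vecm S p
          = ∑ r, P p r * vecm (N ω) r - ∑ r, P p r * (η * vecm S r) := by rw [← h1]; rfl
        _ = ∑ r, (P p r * vecm (N ω) r - P p r * (η * vecm S r)) :=
            (Finset.sum_sub_distrib _ _).symm
        _ = ∑ r, P p r * f r ω := Finset.sum_congr rfl fun r _ => by
            simp only [hfdef]; ring
    have key : (Matrix.of fun p q => ∫ ω,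
        ((P *ᵥ vecm (N ω)) p - η * vecm S p) * ((P *ᵥ vecm (N ω)) q - η * vecm S q) ∂μ)
        = P * V * Pᵀ := by
      ext p q
      show (∫ ω, ((P *ᵥ vecm (N ω)) p - η * vecm S p) * ((P *ᵥ vecm (N ω)) q - η * vecm S q) ∂μ)
        = (P * V * Pᵀ) p q
      calc (∫ ω, ((P *ᵥ vecm (N ω)) p - η * vecm S p) * ((P *ᵥ vecm (N ω)) q - η * vecm S q) ∂μ)
          = ∫ ω, ∑ r, ∑ s, P p r * P q s * (f r ω * f s ω) ∂μ := by
            congr 1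
            funext ω
            rw [hdiff p ω, hdiff q ω, Finset.sum_mul_sum]
            exact Finset.sum_congr rfl fun r _ => Finset.sum_congr rfl fun s _ => by ring
        _ = ∑ r, ∑ s, P p r * P q s * V r s := by
            rw [integral_finset_sum _ (fun r _ =>
              integrable_finset_sum _ (fun s _ => ((hmul r s).const_mul _)))]
            refine Finset.sum_congr rfl fun r _ => ?_
            rw [integral_finset_sum _ (fun s _ => ((hmul r s).const_mul _))]
            refine Finset.sum_congr rfl fun s _ => ?_
            rw [MeasureTheory.integral_const_mul, hVf r s]
        _ = (P * V * Pᵀ) p q := by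
            simp only [Matrix.mul_apply, Matrix.transpose_apply, Finset.sum_mul]
            rw [Finset.sum_comm]
            exact Finset.sum_congr rfl fun r _ => Finset.sum_congr rfl fun s _ => by ring
    rw [key, hvar]
    exact halg
end

section
/- Let D_k be the k²×k(k+1)/2 duplication matrix satisfying D_k vech(A) = vec(A) and (D_kᵀ D_k)⁻¹ D_kᵀ vec(A) = vech(A) for symmetric A. Then for any Σ ∈ PDS(k), D_k (D_kᵀ (Σ⁻¹ ⊗ Σ⁻¹) D_k)⁻¹ D_kᵀ = (1/2)(I_{k²} + K_{k,k})(Σ ⊗ Σ). -/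
open Matrix
open scoped Kronecker

lemma mulVec_ext {n m : Type*} [Fintype n] [DecidableEq n] {A B : Matrix m n ℝ}
    (h : ∀ v, A.mulVec v = B.mulVec v) : A = B := by
  ext i j
  have := congrFun (h (Pi.single j 1)) i
  simpa [Matrix.mulVec_single] using this

lemma kron_mulVec {k : ℕ} (B C A : Matrix (Fin k) (Fin k) ℝ) :
    (B ⊗ₖ C).mulVec (vecm A) = vecm (C * A * Bᵀ) := by
  ext ⟨j, i⟩
  simp only [Matrix.mulVec, vecm, dotProduct, kroneckerMap_apply, Matrix.mul_apply,
    Fintype.sum_prod_type, transpose_apply, Finset.sum_mul, Finset.mul_sum]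
  congr 1; ext l; congr 1; ext m; ring

def symSub (k : ℕ) : Submodule ℝ (Matrix (Fin k) (Fin k) ℝ) where
  carrier := {A | Aᵀ = A}
  add_mem' := fun ha hb => by simp_all [Matrix.transpose_add]
  zero_mem' := by simp
  smul_mem' := fun c A ha => by simp_all [Matrix.transpose_smul]

noncomputable def symEquiv (k : ℕ) :
    ({ p : Fin k × Fin k // p.1 ≤ p.2 } → ℝ) ≃ₗ[ℝ] symSub k where
  toFun f := ⟨Matrix.of fun i j => if h : i ≤ j then f ⟨(i, j), h⟩ else f ⟨(j, i), le_of_not_ge h⟩, by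
    ext i j
    by_cases h : i ≤ j
    · by_cases h' : j ≤ i
      · have : i = j := le_antisymm h h'
        subst this; simp
      · simp [Matrix.transpose_apply, h, h']
    · simp [Matrix.transpose_apply, h, le_of_not_ge h]⟩
  invFun A p := A.1 p.1.1 p.1.2
  map_add' f g := by
    apply Subtype.ext; ext i j
    by_cases h : i ≤ j <;> simp [h]
  map_smul' c f := by
    apply Subtype.ext; ext i j
    by_cases h : i ≤ j <;> simp [h]
  left_inv f := by
    ext ⟨⟨i, j⟩, h⟩
    simp [h]
  right_inv A := by
    apply Subtype.ext; ext i j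
    by_cases h : i ≤ j
    · simp [h]
    · simp only [h, dif_neg, not_false_iff]
      have := congrFun (congrFun A.2 j) i
      simpa [Matrix.transpose_apply, h] using this.symm

lemma finrank_symSub (k : ℕ) :
    Module.finrank ℝ (symSub k) = k * (k + 1) / 2 := by
  rw [← (symEquiv k).finrank_eq, Module.finrank_pi]
  have h1 : Fintype.card { p : Fin k × Fin k // p.1 ≤ p.2 } = Fintype.card (Sym2 (Fin k)) :=
    (Fintype.card_congr Sym2.sortEquiv.symm)
  rw [h1, Sym2.card]
  simp [Nat.choose_two_right, Fintype.card_fin, Nat.mul_comm]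

def vecmLin (k : ℕ) : Matrix (Fin k) (Fin k) ℝ →ₗ[ℝ] (Fin k × Fin k → ℝ) where
  toFun := vecm
  map_add' := fun A B => rfl
  map_smul' := fun c A => rfl

/-- Property of the duplication matrix `D_k`:
`D_k (D_kᵀ (Σ⁻¹ ⊗ Σ⁻¹) D_k)⁻¹ D_kᵀ = ½ (I + K)(Σ ⊗ Σ)` for `Σ` positive definite symmetric,
where `D_k vech A = vec A` and `(D_kᵀD_k)⁻¹D_kᵀ vec A = vech A` for symmetric `A`,
and `K` is the commutation matrix. -/
theorem duplication_property {k : ℕ}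
    (S : Matrix (Fin k) (Fin k) ℝ) (hS : S.PosDef)
    (K : Matrix (Fin k × Fin k) (Fin k × Fin k) ℝ)
    (hK : ∀ A : Matrix (Fin k) (Fin k) ℝ, K.mulVec (vecm A) = vecm Aᵀ)
    (D : Matrix (Fin k × Fin k) (Fin (k * (k + 1) / 2)) ℝ)
    (vech : Matrix (Fin k) (Fin k) ℝ → Fin (k * (k + 1) / 2) → ℝ)
    (hD1 : ∀ A : Matrix (Fin k) (Fin k) ℝ, Aᵀ = A → D.mulVec (vech A) = vecm A)
    (hD2 : ∀ A : Matrix (Fin k) (Fin k) ℝ, Aᵀ = A →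
      ((Dᵀ * D)⁻¹ * Dᵀ).mulVec (vecm A) = vech A) :
    D * (Dᵀ * (S⁻¹ ⊗ₖ S⁻¹) * D)⁻¹ * Dᵀ = (1 / 2 : ℝ) • ((1 + K) * (S ⊗ₖ S)) := by
  set M : Matrix (Fin (k * (k + 1) / 2)) (Fin k × Fin k) ℝ := (Dᵀ * D)⁻¹ * Dᵀ with hM
  -- every vector is `vecm` of some matrix
  have hvm : ∀ v : Fin k × Fin k → ℝ, vecm (Matrix.of fun i j => v (j, i)) = v := fun v => rfl
  -- surjectivity of `vech` onto symmetric matrices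
  have hsur : ∀ v : Fin (k * (k + 1) / 2) → ℝ,
      ∃ A : Matrix (Fin k) (Fin k) ℝ, Aᵀ = A ∧ vech A = v := by
    set vechL : symSub k →ₗ[ℝ] (Fin (k * (k + 1) / 2) → ℝ) :=
      M.mulVecLin ∘ₗ (vecmLin k) ∘ₗ (symSub k).subtype with hvechL
    have hval : ∀ A : symSub k, vechL A = vech A.1 := fun A => hD2 A.1 A.2
    have hinj : Function.Injective vechL := by
      intro A B hAB
      rw [hval, hval] at hAB
      have h2 := congrArg D.mulVec hAB
      rw [hD1 _ A.2, hD1 _ B.2] at h2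
      apply Subtype.ext
      ext i j
      exact congrFun h2 (j, i)
    have hrange : LinearMap.range vechL = ⊤ := by
      apply Submodule.eq_top_of_finrank_eq
      rw [LinearMap.finrank_range_of_inj hinj, finrank_symSub, Module.finrank_fin_fun]
    intro v
    obtain ⟨A, hA⟩ := LinearMap.range_eq_top.mp hrange v
    exact ⟨A.1, A.2, by rw [← hval A, hA]⟩
  -- M * D = 1
  have hMD : M * D = 1 := by
    apply mulVec_ext
    intro v
    obtain ⟨A, hA, rfl⟩ := hsur v
    rw [← Matrix.mulVec_mulVec, hD1 _ hA, hD2 _ hA, Matrix.one_mulVec]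
  -- entries of K
  have hKe : ∀ p q : Fin k × Fin k, K p q = if (p.2, p.1) = q then 1 else 0 := by
    intro p q
    have h1 : vecm (fun i j => if ((j : Fin k), (i : Fin k)) = q then (1:ℝ) else 0)
        = Pi.single q 1 := by
      ext r
      simp [vecm, Pi.single_apply]
    have h2 := congrFun (hK (fun i j => if ((j : Fin k), (i : Fin k)) = q then (1:ℝ) else 0)) p
    rw [h1] at h2
    simpa [Matrix.mulVec_single, vecm, Matrix.transpose] using h2
  have hKsymm : Kᵀ = K := by
    ext p q
    obtain ⟨a, b⟩ := p
    obtain ⟨c, d⟩ := q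
    rw [Matrix.transpose_apply, hKe, hKe]
    have : ((d, c) = (a, b)) ↔ ((b, a) = (c, d)) := by
      simp only [Prod.ext_iff]
      constructor <;> rintro ⟨h1, h2⟩ <;> exact ⟨h2.symm, h1.symm⟩
    rw [if_congr this rfl rfl]
  have hKK : K * K = 1 := by
    apply mulVec_ext
    intro v
    rw [← hvm v, ← Matrix.mulVec_mulVec, hK, hK, Matrix.one_mulVec, Matrix.transpose_transpose]
  have hKcomm : ∀ B : Matrix (Fin k) (Fin k) ℝ, K * (B ⊗ₖ B) = (B ⊗ₖ B) * K := by
    intro B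
    apply mulVec_ext
    intro v
    rw [← hvm v, ← Matrix.mulVec_mulVec, ← Matrix.mulVec_mulVec, kron_mulVec, hK, hK,
      kron_mulVec]
    simp [Matrix.transpose_mul, Matrix.mul_assoc]
  -- the symmetrizer N
  set N : Matrix (Fin k × Fin k) (Fin k × Fin k) ℝ := (1 / 2 : ℝ) • (1 + K) with hN
  have hNvec : ∀ A : Matrix (Fin k) (Fin k) ℝ, Aᵀ = A → N.mulVec (vecm A) = vecm A := by
    intro A hA
    rw [hN, Matrix.smul_mulVec, Matrix.add_mulVec, Matrix.one_mulVec, hK, hA,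
      ← two_smul ℝ (vecm A), smul_smul]
    norm_num
  have hND : N * D = D := by
    apply mulVec_ext
    intro v
    obtain ⟨A, hA, rfl⟩ := hsur v
    rw [← Matrix.mulVec_mulVec, hD1 _ hA, hNvec _ hA]
  set P : Matrix (Fin k × Fin k) (Fin k × Fin k) ℝ := D * M with hP
  have hPN : P * N = N := by
    apply mulVec_ext
    intro v
    set A0 : Matrix (Fin k) (Fin k) ℝ := Matrix.of (fun i j => v (j, i)) with hA0
    set As : Matrix (Fin k) (Fin k) ℝ := (1 / 2 : ℝ) • (A0 + A0ᵀ) with hAs0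
    have hAs : Asᵀ = As := by
      rw [hAs0, Matrix.transpose_smul, Matrix.transpose_add, Matrix.transpose_transpose,
        add_comm]
    have hNv : N.mulVec v = vecm As := by
      have hv : v = vecm A0 := rfl
      rw [hv, hN, Matrix.smul_mulVec, Matrix.add_mulVec, Matrix.one_mulVec, hK]
      ext p
      simp [vecm, hAs0, Matrix.smul_apply, Matrix.add_apply, Matrix.transpose_apply,
        Matrix.of_apply, mul_add]
    rw [← Matrix.mulVec_mulVec, hNv, hP, ← Matrix.mulVec_mulVec, hD2 _ hAs, hD1 _ hAs]
  have hPsymm : Pᵀ = P := by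
    rw [hP, hM, Matrix.transpose_mul, Matrix.transpose_mul, Matrix.transpose_nonsing_inv,
      Matrix.transpose_mul, Matrix.transpose_transpose, ← Matrix.mul_assoc]
  have hNsymm : Nᵀ = N := by
    rw [hN, Matrix.transpose_smul, Matrix.transpose_add, Matrix.transpose_one, hKsymm]
  have hPeN : P = N := by
    have h1 : N * P = N := by
      have := congrArg Matrix.transpose hPN
      rwa [Matrix.transpose_mul, hPsymm, hNsymm] at this
    have h2 : N * P = P := by rw [hP, ← Matrix.mul_assoc, hND]
    rw [← h2, h1]
  -- Kronecker inverses
  have hSinv : S⁻¹ * S = 1 := Matrix.nonsing_inv_mul S hS.det_pos.ne'.isUnit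
  have hWV : (S⁻¹ ⊗ₖ S⁻¹) * (S ⊗ₖ S) = 1 := by
    rw [← Matrix.mul_kronecker_mul, hSinv, Matrix.one_kronecker_one]
  -- commutation of N with Kronecker squares
  have hNcomm : ∀ B : Matrix (Fin k) (Fin k) ℝ, N * (B ⊗ₖ B) = (B ⊗ₖ B) * N := by
    intro B
    rw [hN, Matrix.smul_mul, Matrix.mul_smul, add_mul, mul_add, one_mul, mul_one, hKcomm]
  have hDN : Dᵀ * N = Dᵀ := by
    have := congrArg Matrix.transpose hND
    rwa [Matrix.transpose_mul, hNsymm] at this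
  -- the inverse
  have hDMt : Dᵀ * Mᵀ = 1 := by
    have := congrArg Matrix.transpose hMD
    rwa [Matrix.transpose_mul, Matrix.transpose_one] at this
  have hDMN : D * M = N := by rw [← hP, hPeN]
  have hright : (Dᵀ * (S⁻¹ ⊗ₖ S⁻¹) * D) * (M * (S ⊗ₖ S) * Mᵀ) = 1 := by
    calc (Dᵀ * (S⁻¹ ⊗ₖ S⁻¹) * D) * (M * (S ⊗ₖ S) * Mᵀ)
        = Dᵀ * ((S⁻¹ ⊗ₖ S⁻¹) * ((D * M) * ((S ⊗ₖ S) * Mᵀ))) := by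
          simp only [Matrix.mul_assoc]
      _ = Dᵀ * (((S⁻¹ ⊗ₖ S⁻¹) * N) * ((S ⊗ₖ S) * Mᵀ)) := by
          rw [hDMN, Matrix.mul_assoc]
      _ = Dᵀ * ((N * (S⁻¹ ⊗ₖ S⁻¹)) * ((S ⊗ₖ S) * Mᵀ)) := by rw [← hNcomm]
      _ = (Dᵀ * N) * (((S⁻¹ ⊗ₖ S⁻¹) * (S ⊗ₖ S)) * Mᵀ) := by simp only [Matrix.mul_assoc]
      _ = Dᵀ * Mᵀ := by rw [hDN, hWV, Matrix.one_mul]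
      _ = 1 := hDMt
  have hinv : (Dᵀ * (S⁻¹ ⊗ₖ S⁻¹) * D)⁻¹ = M * (S ⊗ₖ S) * Mᵀ :=
    Matrix.inv_eq_right_inv hright
  have hNN : N * N = N := by
    rw [hN, smul_mul_assoc, mul_smul_comm, smul_smul]
    have h3 : (1 + K) * (1 + K) = (2 : ℝ) • (1 + K) := by
      rw [add_mul, mul_add, mul_add, hKK, two_smul]
      simp only [one_mul, mul_one]
      abel
    rw [h3, smul_smul]
    norm_num
  have hMtDt : Mᵀ * Dᵀ = N := by
    rw [← Matrix.transpose_mul, ← hP, hPsymm, hPeN]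
  rw [hinv]
  have h5 : D * (M * (S ⊗ₖ S) * Mᵀ) * Dᵀ = (D * M) * ((S ⊗ₖ S) * (Mᵀ * Dᵀ)) := by
    simp only [Matrix.mul_assoc]
  rw [h5, hDMN, hMtDt, ← hNcomm, ← Matrix.mul_assoc, hNN, hN, smul_mul_assoc]
end

section
/- Let Σ = V(θ₀) ∈ PDS(k) with V linear and L full column rank, and let H(C) = vec(C)/|C|^{1/k}. Then H'(Σ) [2σ₁ L (Lᵀ(Σ⁻¹⊗Σ⁻¹)L)⁻¹ Lᵀ + σ₂ vec(Σ)vec(Σ)ᵀ] H'(Σ)ᵀ = (2σ₁/|Σ|^{2/k}) { L (Lᵀ (Σ⁻¹ ⊗ Σ⁻¹) L)⁻¹ Lᵀ − (1/k) vec(Σ) vec(Σ)ᵀ }. -/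
open Matrix
open scoped Kronecker

section Aux
variable {n : Type*} [Fintype n]

lemma aux_mul_vecMulVec (A : Matrix n n ℝ) (v w : n → ℝ) :
    A * vecMulVec v w = vecMulVec (A *ᵥ v) w := by
  ext i j
  simp only [mul_apply, vecMulVec_apply, mulVec, dotProduct, Finset.sum_mul]
  exact Finset.sum_congr rfl fun m _ => by ring

lemma aux_vecMulVec_mul (v w : n → ℝ) (A : Matrix n n ℝ) :
    vecMulVec v w * A = vecMulVec v (Aᵀ *ᵥ w) := by
  ext i j
  simp only [mul_apply, vecMulVec_apply, mulVec, dotProduct, Finset.mul_sum, transpose_apply]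
  exact Finset.sum_congr rfl fun m _ => by ring

lemma aux_vecMulVec_mul_vecMulVec (v w x y : n → ℝ) :
    vecMulVec v w * vecMulVec x y = (w ⬝ᵥ x) • vecMulVec v y := by
  ext i j
  simp only [mul_apply, vecMulVec_apply, Matrix.smul_apply, dotProduct, smul_eq_mul, Finset.sum_mul,
    Finset.mul_sum]
  exact Finset.sum_congr rfl fun m _ => by ring

lemma aux_vecMulVec_transpose (v w : n → ℝ) :
    (vecMulVec v w)ᵀ = vecMulVec w v := by
  ext i j; simp [vecMulVec_apply, mul_comm]

end Aux

lemma aux_kron_mulVec_vecm {k : ℕ} (A B C : Matrix (Fin k) (Fin k) ℝ) :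
    (A ⊗ₖ B) *ᵥ vecm C = vecm (B * C * Aᵀ) := by
  funext p
  obtain ⟨j, i⟩ := p
  simp only [mulVec, dotProduct, vecm, kroneckerMap_apply, mul_apply, Fintype.sum_prod_type,
    transpose_apply, Finset.sum_mul]
  exact Finset.sum_congr rfl fun r _ => Finset.sum_congr rfl fun s _ => by ring

set_option maxHeartbeats 1000000 in
/-- The asymptotic variance of the shape estimator: with
`H'(Σ) = -(1/k)|Σ|^{-1/k} vec Σ vec Σ⁻¹ᵀ + |Σ|^{-1/k} I`,
`H'(Σ) [2σ₁ L(Lᵀ(Σ⁻¹⊗Σ⁻¹)L)⁻¹Lᵀ + σ₂ vecΣ vecΣᵀ] H'(Σ)ᵀ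
  = (2σ₁/|Σ|^{2/k}) { L(Lᵀ(Σ⁻¹⊗Σ⁻¹)L)⁻¹Lᵀ - (1/k) vecΣ vecΣᵀ }`. -/
theorem shape_asymptotic_variance {k l : ℕ}
    (θ₀ : Fin l → ℝ) (Ls : Fin l → Matrix (Fin k) (Fin k) ℝ)
    (hsym : ∀ j, (Ls j)ᵀ = Ls j)
    (S : Matrix (Fin k) (Fin k) ℝ) (hSdef : S = ∑ j, θ₀ j • Ls j) (hS : S.PosDef)
    (L : Matrix (Fin k × Fin k) (Fin l) ℝ)
    (hLdef : L = Matrix.of fun p j => vecm (Ls j) p)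
    (hrank : L.rank = l)
    (σ₁ σ₂ : ℝ) :
    ((-(1 / (k : ℝ)) * (S.det ^ ((1 : ℝ) / k))⁻¹) • vecMulVec (vecm S) (vecm S⁻¹)
        + (S.det ^ ((1 : ℝ) / k))⁻¹ • (1 : Matrix (Fin k × Fin k) (Fin k × Fin k) ℝ)) *
      ((2 * σ₁) • (L * (Lᵀ * (S⁻¹ ⊗ₖ S⁻¹) * L)⁻¹ * Lᵀ)
        + σ₂ • vecMulVec (vecm S) (vecm S)) *
      ((-(1 / (k : ℝ)) * (S.det ^ ((1 : ℝ) / k))⁻¹) • vecMulVec (vecm S) (vecm S⁻¹)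
        + (S.det ^ ((1 : ℝ) / k))⁻¹ • (1 : Matrix (Fin k × Fin k) (Fin k × Fin k) ℝ))ᵀ
    = (2 * σ₁ / S.det ^ ((2 : ℝ) / k)) •
        (L * (Lᵀ * (S⁻¹ ⊗ₖ S⁻¹) * L)⁻¹ * Lᵀ
          - (1 / (k : ℝ)) • vecMulVec (vecm S) (vecm S)) := by
  rcases Nat.eq_zero_or_pos k with hk0 | hkpos
  · subst hk0
    ext p q
    exact p.1.elim0
  have hk : (k : ℝ) ≠ 0 := Nat.cast_ne_zero.mpr hkpos.ne'
  have hdet : 0 < S.det := hS.det_pos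
  have hdpos : 0 < S.det ^ ((1 : ℝ) / k) := Real.rpow_pos_of_pos hdet _
  -- symmetry facts
  have hSsym : Sᵀ = S := by
    rw [hSdef, Matrix.transpose_sum]
    simp [transpose_smul, hsym]
  have hSisym : S⁻¹ᵀ = S⁻¹ := by rw [Matrix.transpose_nonsing_inv, hSsym]
  have hSinv : S⁻¹ * S = 1 := Matrix.nonsing_inv_mul S hdet.ne'.isUnit
  set M : Matrix (Fin k × Fin k) (Fin k × Fin k) ℝ := S⁻¹ ⊗ₖ S⁻¹ with hM
  set v : Fin k × Fin k → ℝ := vecm S with hv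
  set w : Fin k × Fin k → ℝ := vecm S⁻¹ with hw
  have hMv : M *ᵥ v = w := by
    rw [hM, hv, aux_kron_mulVec_vecm, hSisym, hSinv, one_mul, hw]
  have hvL : v = L *ᵥ θ₀ := by
    funext p
    rw [hv, hSdef, hLdef]
    simp only [vecm, Matrix.sum_apply, Matrix.smul_apply, smul_eq_mul, mulVec, dotProduct,
      Matrix.of_apply]
    exact Finset.sum_congr rfl fun j _ => by ring
  -- injectivity of L
  have hLinj : ∀ x : Fin l → ℝ, L *ᵥ x = 0 → x = 0 := by
    have h1 := LinearMap.finrank_range_add_finrank_ker L.mulVecLin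
    have hr : Module.finrank ℝ (LinearMap.range L.mulVecLin) = l := hrank
    rw [hr] at h1
    simp only [Module.finrank_pi, Fintype.card_fin] at h1
    have h2 : Module.finrank ℝ (LinearMap.ker L.mulVecLin) = 0 := by omega
    have h3 : LinearMap.ker L.mulVecLin = ⊥ := Submodule.finrank_eq_zero.mp h2
    intro x hx
    have hx' : x ∈ LinearMap.ker L.mulVecLin := by
      simpa [Matrix.mulVecLin_apply] using hx
    rw [h3] at hx'
    simpa using hx'
  -- conjTranspose is transpose over ℝ
  have hCT : ∀ {α β : Type} (A : Matrix α β ℝ), Aᴴ = Aᵀ := by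
    intro α β A; ext i j; simp [conjTranspose_apply]
  -- M is positive semidefinite / definite
  have hMsym : Mᵀ = M := by
    rw [hM, ← Matrix.kroneckerMap_transpose, hSisym]
  have hMps : M.PosSemidef := by
    exact hS.inv.posSemidef.kronecker hS.inv.posSemidef
  have hMunit : IsUnit M := by
    rw [Matrix.isUnit_iff_isUnit_det, hM, Matrix.det_kronecker]
    simp only [Fintype.card_fin]
    have h0 := hS.inv.det_pos
    exact (by positivity : (0:ℝ) < S⁻¹.det ^ k * S⁻¹.det ^ k).ne'.isUnit
  have hMpd : M.PosDef := by
    refine Matrix.PosDef.of_dotProduct_mulVec_pos hMps.1 fun x hx =>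
      lt_of_le_of_ne (hMps.dotProduct_mulVec_nonneg x) (Ne.symm fun h0 => hx ?_)
    have hMx : M *ᵥ x = 0 := by
      have := (hMps.dotProduct_mulVec_zero_iff x).mp h0
      simpa [Matrix.toLin'_apply] using this
    have hinj := Matrix.mulVec_injective_iff_isUnit.mpr hMunit
    exact hinj (by simpa using hMx)
  -- N = Lᵀ M L is positive definite
  set N : Matrix (Fin l) (Fin l) ℝ := Lᵀ * M * L with hN
  have hNps : N.PosSemidef := by
    rw [hN, ← hCT L]
    exact hMps.conjTranspose_mul_mul_same L
  have hNpd : N.PosDef := by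
    refine Matrix.PosDef.of_dotProduct_mulVec_pos hNps.1 fun x hx => ?_
    have hLx : L *ᵥ x ≠ 0 := fun h => hx (hLinj x h)
    have hpos := hMpd.dotProduct_mulVec_pos hLx
    have heq : star x ⬝ᵥ N *ᵥ x = star (L *ᵥ x) ⬝ᵥ M *ᵥ (L *ᵥ x) := by
      simp only [star_trivial, hN]
      rw [← Matrix.mulVec_mulVec, ← Matrix.mulVec_mulVec, Matrix.dotProduct_mulVec,
        Matrix.vecMul_transpose]
    rw [heq]
    exact hpos
  have hN1 : N⁻¹ * N = 1 :=
    Matrix.nonsing_inv_mul N ((Matrix.isUnit_iff_isUnit_det N).mp hNpd.isUnit)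
  set P : Matrix (Fin k × Fin k) (Fin k × Fin k) ℝ := L * N⁻¹ * Lᵀ with hP
  -- symmetry of P
  have hNsym : Nᵀ = N := by
    rw [hN, transpose_mul, transpose_mul, transpose_transpose, hMsym, ← Matrix.mul_assoc]
  have hNisym : N⁻¹ᵀ = N⁻¹ := by rw [Matrix.transpose_nonsing_inv, hNsym]
  have hPsym : Pᵀ = P := by
    rw [hP, transpose_mul, transpose_mul, transpose_transpose, hNisym, ← Matrix.mul_assoc]
  -- P *ᵥ w = v
  have hPML : P * M * L = L := by
    rw [hP]
    simp only [Matrix.mul_assoc]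
    rw [show Lᵀ * (M * L) = N from by rw [hN, Matrix.mul_assoc], hN1, Matrix.mul_one]
  have hPw : P *ᵥ w = v := by
    rw [← hMv, Matrix.mulVec_mulVec, hvL, Matrix.mulVec_mulVec, hPML]
  -- trace identity
  have hwv : w ⬝ᵥ v = (k : ℝ) := by
    have h1 : w ⬝ᵥ v = (S⁻¹ * S).trace := by
      rw [hw, hv]
      simp only [dotProduct, vecm, Matrix.trace, Matrix.diag_apply, Matrix.mul_apply,
        Fintype.sum_prod_type]
      rw [Finset.sum_comm]
      refine Finset.sum_congr rfl fun a _ => Finset.sum_congr rfl fun b _ => ?_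
      have h := congrFun (congrFun hSsym a) b
      rw [Matrix.transpose_apply] at h
      rw [h]
    rw [h1, hSinv, Matrix.trace_one]
    simp
  have hvw : v ⬝ᵥ w = (k : ℝ) := by rw [dotProduct_comm]; exact hwv
  -- product identities
  have hQP : vecMulVec v w * P = vecMulVec v v := by
    rw [aux_vecMulVec_mul, hPsym, hPw]
  have hPQ : P * vecMulVec w v = vecMulVec v v := by
    rw [aux_mul_vecMulVec, hPw]
  have hQV : vecMulVec v w * vecMulVec v v = (k : ℝ) • vecMulVec v v := by
    rw [aux_vecMulVec_mul_vecMulVec, hwv]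
  have hVQ : vecMulVec v v * vecMulVec w v = (k : ℝ) • vecMulVec v v := by
    rw [aux_vecMulVec_mul_vecMulVec, hvw]
  have hQQ : vecMulVec v w * vecMulVec w v = (w ⬝ᵥ w) • vecMulVec v v := by
    rw [aux_vecMulVec_mul_vecMulVec]
  have h2k : S.det ^ ((2 : ℝ) / k) = S.det ^ ((1 : ℝ) / k) * S.det ^ ((1 : ℝ) / k) := by
    rw [show (2 : ℝ) / (k : ℝ) = 1 / k + 1 / k by ring, Real.rpow_add hdet]
  rw [h2k]
  simp only [transpose_add, transpose_smul, transpose_one, aux_vecMulVec_transpose,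
    add_mul, mul_add, smul_mul_assoc, mul_smul_comm, smul_smul, one_mul, mul_one,
    hQP, hPQ, hQV, hVQ, hQQ, smul_add, smul_sub]
  match_scalars <;> (field_simp; try ring)
end

section
/- Let Σ = V(θ₀) ∈ PDS(k) with V linear, L full column rank, E = (Σ^{-1/2} ⊗ Σ^{-1/2}) L, and suppose vec(Σ) = Lθ₀. Then (EᵀE)⁻¹ Eᵀ vec(I_k) = θ₀; consequently, for scalars a, b with γ₁ ≠ 0 and γ₁ − kγ₂ ≠ 0, the matrix Λ = γ₁ Lᵀ(Σ⁻¹⊗Σ⁻¹)L − γ₂ Lᵀ vec(Σ⁻¹) vec(Σ⁻¹)ᵀ L has inverse Λ⁻¹ = (1/γ₁)(Lᵀ(Σ⁻¹⊗Σ⁻¹)L)⁻¹ + (γ₂/(γ₁(γ₁−kγ₂))) θ₀θ₀ᵀ. -/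
open Matrix
open scoped Kronecker

open scoped ComplexOrder in
/-- The square root of a positive semidefinite matrix, as `Matrix.PosSemidef.sqrt` was defined
in the older Mathlib (removed since). -/
noncomputable def Matrix.PosSemidef.sqrt {n : Type*} [Fintype n] [DecidableEq n] {𝕜 : Type*}
    [RCLike 𝕜] {A : Matrix n n 𝕜} (hA : A.PosSemidef) : Matrix n n 𝕜 :=
  hA.1.eigenvectorUnitary.1 * diagonal ((↑) ∘ (√·) ∘ hA.1.eigenvalues) *
    (star hA.1.eigenvectorUnitary : Matrix n n 𝕜)

lemma psd_sqrt_mul_self {k : ℕ} {S : Matrix (Fin k) (Fin k) ℝ} (hA : S.PosSemidef) :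
    PosSemidef.sqrt hA * PosSemidef.sqrt hA = S := by
  have hU : (star hA.1.eigenvectorUnitary : Matrix (Fin k) (Fin k) ℝ) *
      (hA.1.eigenvectorUnitary : Matrix (Fin k) (Fin k) ℝ) = 1 :=
    Unitary.coe_star_mul_self _
  unfold PosSemidef.sqrt
  simp only [Matrix.mul_assoc]
  rw [← Matrix.mul_assoc (star _ : Matrix (Fin k) (Fin k) ℝ) _, hU, Matrix.one_mul,
    ← Matrix.mul_assoc (diagonal _), diagonal_mul_diagonal]
  conv_rhs => rw [hA.1.spectral_theorem, Unitary.conjStarAlgAut_apply]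
  rw [Matrix.mul_assoc]
  congr 3
  funext i
  simp [Real.mul_self_sqrt (hA.eigenvalues_nonneg i)]

lemma psd_sqrt_transpose {k : ℕ} {S : Matrix (Fin k) (Fin k) ℝ} (hA : S.PosSemidef) :
    (PosSemidef.sqrt hA)ᵀ = PosSemidef.sqrt hA := by
  unfold PosSemidef.sqrt
  rw [Matrix.star_eq_conjTranspose, conjTranspose_eq_transpose_of_trivial]
  simp only [transpose_mul, transpose_transpose, diagonal_transpose, Matrix.mul_assoc]

lemma kron_mulVec_vecm {k : ℕ} (A B M : Matrix (Fin k) (Fin k) ℝ) :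
    (A ⊗ₖ B).mulVec (vecm M) = vecm (B * M * Aᵀ) := by
  ext ⟨j, i⟩
  simp only [mulVec, dotProduct, vecm, kroneckerMap_apply, mul_apply,
    Fintype.sum_prod_type, transpose_apply]
  refine Finset.sum_congr rfl fun p _ => ?_
  rw [Finset.sum_mul]
  exact Finset.sum_congr rfl fun q _ => by ring

lemma mul_vecMulVec {m n p : Type*} [Fintype m] (M : Matrix p m ℝ) (a : m → ℝ) (b : n → ℝ) :
    M * vecMulVec a b = vecMulVec (M.mulVec a) b := by
  ext i j
  simp only [mul_apply, vecMulVec_apply, mulVec, dotProduct, Finset.sum_mul]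
  exact Finset.sum_congr rfl fun q _ => by ring

lemma vecMulVec_mul {m n p : Type*} [Fintype m] (M : Matrix m p ℝ) (a : n → ℝ) (b : m → ℝ) :
    vecMulVec a b * M = vecMulVec a (Mᵀ.mulVec b) := by
  ext i j
  simp only [mul_apply, vecMulVec_apply, mulVec, dotProduct, transpose_apply, Finset.mul_sum]
  exact Finset.sum_congr rfl fun q _ => by ring

lemma vecMulVec_mul_vecMulVec {m n p : Type*} [Fintype n] (a : m → ℝ) (b c : n → ℝ) (d : p → ℝ) :
    vecMulVec a b * vecMulVec c d = (b ⬝ᵥ c) • vecMulVec a d := by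
  ext i j
  simp only [mul_apply, vecMulVec_apply, dotProduct, Matrix.smul_apply, smul_eq_mul, Finset.sum_mul]
  exact Finset.sum_congr rfl fun q _ => by ring

/-- With `E = (Σ^{-1/2} ⊗ Σ^{-1/2}) L` one has `(EᵀE)⁻¹Eᵀ vec(I) = θ₀`, and for
`γ₁ ≠ 0`, `γ₁ - kγ₂ ≠ 0`, the matrix
`Λ = γ₁ Lᵀ(Σ⁻¹⊗Σ⁻¹)L - γ₂ Lᵀ vec(Σ⁻¹) vec(Σ⁻¹)ᵀ L` has inverse
`Λ⁻¹ = (1/γ₁)(Lᵀ(Σ⁻¹⊗Σ⁻¹)L)⁻¹ + (γ₂/(γ₁(γ₁-kγ₂))) θ₀θ₀ᵀ`. -/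
theorem Lambda_inverse {k l : ℕ}
    (S : Matrix (Fin k) (Fin k) ℝ) (hS : S.PosDef)
    (θ₀ : Fin l → ℝ)
    (L : Matrix (Fin k × Fin k) (Fin l) ℝ)
    (hvec : vecm S = L.mulVec θ₀)
    (hrank : L.rank = l)
    (γ₁ γ₂ : ℝ) (h1 : γ₁ ≠ 0) (h2 : γ₁ - k * γ₂ ≠ 0) :
    (((((PosSemidef.sqrt hS.posSemidef)⁻¹ ⊗ₖ (PosSemidef.sqrt hS.posSemidef)⁻¹) * L)ᵀ *
          (((PosSemidef.sqrt hS.posSemidef)⁻¹ ⊗ₖ (PosSemidef.sqrt hS.posSemidef)⁻¹) * L))⁻¹ *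
        (((PosSemidef.sqrt hS.posSemidef)⁻¹ ⊗ₖ (PosSemidef.sqrt hS.posSemidef)⁻¹) * L)ᵀ).mulVec
        (vecm (1 : Matrix (Fin k) (Fin k) ℝ)) = θ₀ ∧
    (γ₁ • (Lᵀ * (S⁻¹ ⊗ₖ S⁻¹) * L)
        - γ₂ • (Lᵀ * vecMulVec (vecm S⁻¹) (vecm S⁻¹) * L))⁻¹
      = γ₁⁻¹ • (Lᵀ * (S⁻¹ ⊗ₖ S⁻¹) * L)⁻¹
          + (γ₂ / (γ₁ * (γ₁ - k * γ₂))) • vecMulVec θ₀ θ₀ := by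
  have hSsym : Sᵀ = S := hS.isHermitian
  have hSdet : IsUnit S.det := hS.det_pos.ne'.isUnit
  set R := PosSemidef.sqrt hS.posSemidef with hRdef
  have hRR : R * R = S := psd_sqrt_mul_self _
  have hRsym : Rᵀ = R := psd_sqrt_transpose _
  have hRdet0 : R.det ≠ 0 := by
    have h : R.det * R.det = S.det := by rw [← det_mul, hRR]
    intro h0
    rw [h0, mul_zero] at h
    exact hS.det_pos.ne' h.symm
  have hRinvsym : (R⁻¹)ᵀ = R⁻¹ := by rw [transpose_nonsing_inv, hRsym]
  have hSinvsym : (S⁻¹)ᵀ = S⁻¹ := by rw [transpose_nonsing_inv, hSsym]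
  have hSinv : R⁻¹ * R⁻¹ = S⁻¹ := by rw [← Matrix.mul_inv_rev, hRR]
  set Q := R⁻¹ ⊗ₖ R⁻¹ with hQdef
  have hQsym : Qᵀ = Q := by
    rw [hQdef, ← kroneckerMap_transpose, hRinvsym]
  have hQQ : Q * Q = S⁻¹ ⊗ₖ S⁻¹ := by
    rw [hQdef, ← mul_kronecker_mul, hSinv]
  have hQunit : IsUnit Q := by
    rw [isUnit_iff_isUnit_det, hQdef, det_kronecker, det_nonsing_inv, Ring.inverse_eq_inv']
    exact isUnit_iff_ne_zero.mpr (mul_ne_zero (pow_ne_zero _ (inv_ne_zero hRdet0))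
      (pow_ne_zero _ (inv_ne_zero hRdet0)))
  -- injectivity of L
  have hLinj : Function.Injective L.mulVec := by
    have h2' := LinearMap.finrank_range_add_finrank_ker L.mulVecLin
    rw [show Module.finrank ℝ (LinearMap.range L.mulVecLin) = l from hrank] at h2'
    simp only [Module.finrank_pi, Fintype.card_fin] at h2'
    have hker : LinearMap.ker L.mulVecLin = ⊥ :=
      Submodule.finrank_eq_zero.mp (by omega)
    have := LinearMap.ker_eq_bot.mp hker
    intro x y hxy
    exact this (by simpa [Matrix.mulVecLin_apply] using hxy)
  set A := Lᵀ * (S⁻¹ ⊗ₖ S⁻¹) * L with hAdef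
  have hAsym : Aᵀ = A := by
    rw [hAdef, transpose_mul, transpose_mul, transpose_transpose,
      ← kroneckerMap_transpose, hSinvsym, Matrix.mul_assoc]
  have hEA : (Q * L)ᵀ * (Q * L) = A := by
    rw [transpose_mul, hQsym, hAdef, ← hQQ]
    rw [Matrix.mul_assoc, Matrix.mul_assoc, Matrix.mul_assoc Q Q L]
  have hApos : A.PosDef := by
    refine posDef_iff_dotProduct_mulVec.mpr ⟨?_, ?_⟩
    · exact hAsym
    · intro x hx
      have hy : (Q * L).mulVec x ≠ 0 := by
        rw [← Matrix.mulVec_mulVec]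
        intro h0
        have hLx : L.mulVec x ≠ 0 := fun h => hx (hLinj (by simpa using h))
        exact hLx ((mulVec_injective_iff_isUnit.mpr hQunit) (by simpa using h0))
      have key : star x ⬝ᵥ A.mulVec x = (Q * L).mulVec x ⬝ᵥ (Q * L).mulVec x := by
        rw [← hEA, ← Matrix.mulVec_mulVec, Matrix.dotProduct_mulVec, star_trivial,
          Matrix.vecMul_transpose]
      rw [key]
      have hnn : (0:ℝ) ≤ (Q * L).mulVec x ⬝ᵥ (Q * L).mulVec x :=
        Finset.sum_nonneg fun i _ => mul_self_nonneg _
      exact hnn.lt_of_ne (fun h => hy (dotProduct_self_eq_zero.mp h.symm))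
  have hAdet : IsUnit A.det := (isUnit_iff_isUnit_det A).mp hApos.isUnit
  have hAinvsym : (A⁻¹)ᵀ = A⁻¹ := by rw [transpose_nonsing_inv, hAsym]
  -- vector identities
  have hvS : (S⁻¹ ⊗ₖ S⁻¹).mulVec (vecm S) = vecm S⁻¹ := by
    rw [kron_mulVec_vecm, hSinvsym, Matrix.mul_assoc, Matrix.mul_nonsing_inv _ hSdet, mul_one]
  have hQ1 : Q.mulVec (vecm (1 : Matrix (Fin k) (Fin k) ℝ)) = vecm S⁻¹ := by
    rw [hQdef, kron_mulVec_vecm, mul_one, hRinvsym, hSinv]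
  have hw : Lᵀ.mulVec (vecm S⁻¹) = A.mulVec θ₀ := by
    rw [← hvS, hvec, Matrix.mulVec_mulVec, Matrix.mulVec_mulVec, hAdef]
  have hk : θ₀ ⬝ᵥ A.mulVec θ₀ = (k : ℝ) := by
    rw [← hw, Matrix.dotProduct_mulVec, Matrix.vecMul_transpose, ← hvec]
    have : vecm S ⬝ᵥ vecm S⁻¹ = Matrix.trace (S⁻¹ * S) := by
      simp only [dotProduct, vecm, Matrix.trace, Matrix.diag_apply, mul_apply,
        Fintype.sum_prod_type, Finset.sum_apply]
      rw [Finset.sum_comm]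
      have hs : ∀ a b, S a b = S b a := fun a b => by conv_lhs => rw [← hSsym, transpose_apply]
      refine Finset.sum_congr rfl fun p _ => Finset.sum_congr rfl fun q _ => ?_
      rw [hs q p]
      ring
    rw [this, Matrix.nonsing_inv_mul _ hSdet, Matrix.trace_one]
    simp
  constructor
  · -- part 1
    rw [hEA, ← Matrix.mulVec_mulVec, transpose_mul, hQsym, ← Matrix.mulVec_mulVec,
      hQ1, hw, Matrix.mulVec_mulVec, Matrix.nonsing_inv_mul _ hAdet, Matrix.one_mulVec]
  · -- part 2
    have hW : Lᵀ * vecMulVec (vecm S⁻¹) (vecm S⁻¹) * L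
        = vecMulVec (A.mulVec θ₀) (A.mulVec θ₀) := by
      rw [_root_.mul_vecMulVec, _root_.vecMulVec_mul, hw]
    rw [hW]
    apply Matrix.inv_eq_right_inv
    have e1 : A * vecMulVec θ₀ θ₀ = vecMulVec (A.mulVec θ₀) θ₀ := _root_.mul_vecMulVec _ _ _
    have e2 : vecMulVec (A.mulVec θ₀) (A.mulVec θ₀) * A⁻¹ = vecMulVec (A.mulVec θ₀) θ₀ := by
      rw [_root_.vecMulVec_mul, hAinvsym, Matrix.mulVec_mulVec, Matrix.nonsing_inv_mul _ hAdet,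
        Matrix.one_mulVec]
    have e3 : vecMulVec (A.mulVec θ₀) (A.mulVec θ₀) * vecMulVec θ₀ θ₀
        = (k : ℝ) • vecMulVec (A.mulVec θ₀) θ₀ := by
      rw [_root_.vecMulVec_mul_vecMulVec, dotProduct_comm, hk]
    have e4 : A * A⁻¹ = 1 := Matrix.mul_nonsing_inv _ hAdet
    simp only [sub_mul, mul_add, Matrix.smul_mul, Matrix.mul_smul]
    rw [e1, e2, e3, e4]
    match_scalars
    · field_simp
    · have h2' : -(γ₂ * ↑k) + γ₁ ≠ 0 := by contrapose! h2; linarith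
      field_simp
      linear_combination γ₂ * mul_inv_cancel₀ h2'
end
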